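/- Let θ₁ ∈ (−π, π), let g : ℝ → ℝ be continuous and 2π-periodic, and let a, b satisfy −π ≤ a < θ₁ < b ≤ π. Then ∫_{a}^{b} g(θ)·u_δ(ρ, θ, θ₁) dθ tends to g(θ₁) as ρ → 1⁻, where u_δ(ρ, θ, θ₁) = 1/(2π) − (1/π)·ρ(ρ − cos(θ − θ₁)) / ((ρ² + 1) − 2ρ cos(θ − θ₁)). -/

import Mathlib

open Real Filter

open Real Filter MeasureTheory intervalIntegral

noncomputable def pk (ρ x : ℝ) : ℝ :=
  (1 - ρ ^ 2) / (2 * Real.pi * ((ρ ^ 2 + 1) - 2 * ρ * Real.cos x))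

lemma pk_denom_pos {ρ : ℝ} (h0 : 0 < ρ) (h1 : ρ < 1) (x : ℝ) :
    0 < (ρ ^ 2 + 1) - 2 * ρ * Real.cos x := by
  nlinarith [Real.cos_le_one x, sq_nonneg (1 - ρ)]

lemma pk_nonneg {ρ : ℝ} (h0 : 0 < ρ) (h1 : ρ < 1) (x : ℝ) : 0 ≤ pk ρ x := by
  have h := pk_denom_pos h0 h1 x
  have h' : (0:ℝ) < 2 * Real.pi * ((ρ ^ 2 + 1) - 2 * ρ * Real.cos x) := by
    have := Real.pi_pos; positivity
  have h2 : (0:ℝ) ≤ 1 - ρ ^ 2 := by nlinarith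
  exact div_nonneg h2 h'.le

lemma pk_eq {ρ : ℝ} (h0 : 0 < ρ) (h1 : ρ < 1) (x : ℝ) :
    1 / (2 * Real.pi) - (1 / Real.pi) * (ρ * (ρ - Real.cos x)) /
      ((ρ ^ 2 + 1) - 2 * ρ * Real.cos x) = pk ρ x := by
  have hD := (pk_denom_pos h0 h1 x).ne'
  have hpi := Real.pi_ne_zero
  unfold pk
  field_simp
  ring

lemma pk_continuous {ρ : ℝ} (h0 : 0 < ρ) (h1 : ρ < 1) : Continuous (pk ρ) := by
  apply continuous_const.div (by continuity)
  intro x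
  have h := pk_denom_pos h0 h1 x
  have := Real.pi_pos
  positivity

lemma pk_le {ρ m : ℝ} (h0 : 1/2 ≤ ρ) (h1 : ρ < 1) (hm : m < 1) {x : ℝ}
    (hx : Real.cos x ≤ m) : pk ρ x ≤ (1 - ρ ^ 2) / (2 * Real.pi * (1 - m)) := by
  have h0' : (0:ℝ) < ρ := by linarith
  have hnum : (0:ℝ) ≤ 1 - ρ ^ 2 := by nlinarith
  have hden : (1:ℝ) - m ≤ (ρ ^ 2 + 1) - 2 * ρ * Real.cos x := by nlinarith
  have hm' : (0:ℝ) < 1 - m := by linarith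
  have hpi := Real.pi_pos
  unfold pk
  gcongr

lemma pk_hasDerivAt {ρ : ℝ} (h0 : 0 < ρ) (h1 : ρ < 1) {x : ℝ}
    (hx : x ∈ Set.Ioo (-Real.pi) Real.pi) :
    HasDerivAt (fun x => π⁻¹ * Real.arctan ((1 + ρ) / (1 - ρ) * Real.tan (x / 2)))
      (pk ρ x) x := by
  set c : ℝ := (1 + ρ) / (1 - ρ) with hc
  have hρ1 : (0:ℝ) < 1 - ρ := by linarith
  have hx2 : x / 2 ∈ Set.Ioo (-(Real.pi/2)) (Real.pi/2) := by
    constructor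
    · linarith [hx.1]
    · linarith [hx.2]
  have hcs : 0 < Real.cos (x / 2) := Real.cos_pos_of_mem_Ioo hx2
  have h1' : HasDerivAt (fun y : ℝ => y / 2) (1/2) x := by
    simpa using (hasDerivAt_id x).div_const 2
  have h2 : HasDerivAt Real.tan (1 / Real.cos (x/2) ^ 2) (x/2) :=
    Real.hasDerivAt_tan hcs.ne'
  have h3 : HasDerivAt (fun y : ℝ => Real.tan (y / 2)) (1 / Real.cos (x/2) ^ 2 * (1/2)) x :=
    HasDerivAt.comp (h := fun y : ℝ => y / 2) x h2 h1'
  have h4 := h3.const_mul c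
  have h5 := (Real.hasDerivAt_arctan (c * Real.tan (x/2))).comp x h4
  have h6 := h5.const_mul (π⁻¹ : ℝ)
  convert h6 using 1
  show pk ρ x = π⁻¹ * (1 / (1 + (c * Real.tan (x/2)) ^ 2) * (c * (1 / Real.cos (x/2) ^ 2 * (1/2))))
  have hcosx : Real.cos x = 2 * Real.cos (x/2) ^ 2 - 1 := by
    have h := Real.cos_two_mul (x/2)
    rw [show 2 * (x/2) = x by ring] at h
    exact h
  have hsin : Real.sin (x/2) ^ 2 = 1 - Real.cos (x/2) ^ 2 := by
    have := Real.sin_sq_add_cos_sq (x/2); linarith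
  have hD := (pk_denom_pos h0 h1 x).ne'
  rw [hcosx] at hD
  have hpi := Real.pi_ne_zero
  have h1ρ : (1 - ρ) ≠ 0 := hρ1.ne'
  unfold pk
  rw [Real.tan_eq_sin_div_cos, hcosx, hc]
  set C := Real.cos (x/2) with hC
  set S := Real.sin (x/2) with hS
  field_simp
  rw [div_eq_iff (by contrapose! hD; linarith)]
  linear_combination (1 - ρ ^ 2) * (1 + ρ) ^ 2 * hsin
  all_goals rfl

lemma pk_integral {ρ : ℝ} (h0 : 0 < ρ) (h1 : ρ < 1) :
    ∫ x in (-Real.pi)..Real.pi, pk ρ x = 1 := by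
  set c : ℝ := (1 + ρ) / (1 - ρ) with hc
  have hρ1 : (0:ℝ) < 1 - ρ := by linarith
  have hcpos : 0 < c := by positivity
  have hint : IntervalIntegrable (pk ρ) volume (-Real.pi) Real.pi :=
    (pk_continuous h0 h1).intervalIntegrable _ _
  have hhalf_top : Tendsto (fun x : ℝ => x / 2) (nhdsWithin Real.pi (Set.Iio Real.pi))
      (nhdsWithin (Real.pi/2) (Set.Iio (Real.pi/2))) := by
    apply tendsto_nhdsWithin_of_tendsto_nhds_of_eventually_within
    · exact tendsto_nhdsWithin_of_tendsto_nhds ((continuous_id.div_const 2).tendsto Real.pi)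
    · filter_upwards [self_mem_nhdsWithin] with x (hx : x < Real.pi)
      exact div_lt_div_of_pos_right hx two_pos
  have hhalf_bot : Tendsto (fun x : ℝ => x / 2) (nhdsWithin (-Real.pi) (Set.Ioi (-Real.pi)))
      (nhdsWithin (-(Real.pi/2)) (Set.Ioi (-(Real.pi/2)))) := by
    apply tendsto_nhdsWithin_of_tendsto_nhds_of_eventually_within
    · have := (continuous_id.div_const 2).tendsto (-Real.pi)
      simpa [neg_div] using tendsto_nhdsWithin_of_tendsto_nhds this
    · filter_upwards [self_mem_nhdsWithin] with x (hx : -Real.pi < x)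
      show -(Real.pi/2) < x / 2
      linarith
  have htan_top : Tendsto (fun x : ℝ => Real.tan (x / 2))
      (nhdsWithin Real.pi (Set.Iio Real.pi)) atTop :=
    Real.tendsto_tan_pi_div_two.comp hhalf_top
  have htan_bot : Tendsto (fun x : ℝ => Real.tan (x / 2))
      (nhdsWithin (-Real.pi) (Set.Ioi (-Real.pi))) atBot :=
    Real.tendsto_tan_neg_pi_div_two.comp hhalf_bot
  have hF_top : Tendsto (fun x : ℝ => π⁻¹ * Real.arctan (c * Real.tan (x / 2)))
      (nhdsWithin Real.pi (Set.Iio Real.pi)) (nhds (1/2 : ℝ)) := by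
    have h2 : Tendsto (fun x : ℝ => c * Real.tan (x / 2))
        (nhdsWithin Real.pi (Set.Iio Real.pi)) atTop := htan_top.const_mul_atTop hcpos
    have h3 := (Real.tendsto_arctan_atTop.mono_right nhdsWithin_le_nhds).comp h2
    have h4 := h3.const_mul (π⁻¹ : ℝ)
    have : π⁻¹ * (π/2) = (1/2 : ℝ) := by
      field_simp
    rwa [this] at h4
  have hF_bot : Tendsto (fun x : ℝ => π⁻¹ * Real.arctan (c * Real.tan (x / 2)))
      (nhdsWithin (-Real.pi) (Set.Ioi (-Real.pi))) (nhds (-(1/2) : ℝ)) := by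
    have h2 : Tendsto (fun x : ℝ => c * Real.tan (x / 2))
        (nhdsWithin (-Real.pi) (Set.Ioi (-Real.pi))) atBot := htan_bot.const_mul_atBot hcpos
    have h3 := (Real.tendsto_arctan_atBot.mono_right nhdsWithin_le_nhds).comp h2
    have h4 := h3.const_mul (π⁻¹ : ℝ)
    have : π⁻¹ * (-(π/2)) = (-(1/2) : ℝ) := by
      field_simp
    rwa [this] at h4
  rw [integral_eq_sub_of_hasDerivAt_of_tendsto (by linarith [Real.pi_pos] : -Real.pi < Real.pi)
    (fun x hx => pk_hasDerivAt h0 h1 hx) hint hF_bot hF_top]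
  norm_num

lemma cos_lt_one_of {y : ℝ} (h1 : -(2*Real.pi) < y) (h2 : y < 2*Real.pi) (h3 : y ≠ 0) :
    Real.cos y < 1 := by
  rcases lt_or_eq_of_le (Real.cos_le_one y) with h | h
  · exact h
  · exact absurd ((Real.cos_eq_one_iff_of_lt_of_lt h1 h2).1 h) h3

lemma exists_cos_bound (θ₁ : ℝ) {s : Set ℝ} (hs : IsCompact s) (hne : s.Nonempty)
    (h : ∀ x ∈ s, Real.cos (x - θ₁) < 1) :
    ∃ m, m < 1 ∧ ∀ x ∈ s, Real.cos (x - θ₁) ≤ m := by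
  obtain ⟨x₀, hx₀, hmax⟩ := hs.exists_isMaxOn hne
    ((Real.continuous_cos.comp (continuous_id.sub continuous_const)).continuousOn)
  exact ⟨Real.cos (x₀ - θ₁), h x₀ hx₀, fun x hx => hmax hx⟩

lemma bound_tendsto (m : ℝ) (hm : m < 1) :
    Tendsto (fun ρ : ℝ => (1 - ρ ^ 2) / (2 * Real.pi * (1 - m)))
      (nhdsWithin 1 (Set.Iio 1)) (nhds 0) := by
  have h : Tendsto (fun ρ : ℝ => (1 - ρ ^ 2) / (2 * Real.pi * (1 - m))) (nhds 1)
      (nhds ((1 - 1 ^ 2) / (2 * Real.pi * (1 - m)))) :=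
    ((continuous_const.sub (continuous_pow 2)).div_const _).tendsto 1
  norm_num at h
  exact h.mono_left nhdsWithin_le_nhds

lemma pk_unif (θ₁ m : ℝ) (hm : m < 1) {s : Set ℝ} (h : ∀ x ∈ s, Real.cos (x - θ₁) ≤ m) :
    TendstoUniformlyOn (fun ρ x => pk ρ (x - θ₁)) 0 (nhdsWithin 1 (Set.Iio 1)) s := by
  rw [Metric.tendstoUniformlyOn_iff]
  intro ε hε
  have hmem : Set.Ioo (1/2 : ℝ) 1 ∈ nhdsWithin 1 (Set.Iio 1) :=
    Ioo_mem_nhdsLT_of_mem (by norm_num)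
  filter_upwards [hmem, (bound_tendsto m hm).eventually (gt_mem_nhds hε)] with ρ hρ hB
  intro x hx
  have h0 : (0:ℝ) < ρ := by linarith [hρ.1]
  have hpk := pk_nonneg h0 hρ.2 (x - θ₁)
  have hle := pk_le hρ.1.le hρ.2 hm (h x hx)
  rw [Real.dist_eq]
  rw [abs_sub_comm, abs_of_nonneg (by simpa using hpk)]
  simpa using lt_of_le_of_lt hle hB

lemma tail_tendsto (θ₁ c d m : ℝ) (hm : m < 1)
    (h : ∀ x ∈ Set.uIcc c d, Real.cos (x - θ₁) ≤ m) :
    Tendsto (fun ρ : ℝ => ∫ x in c..d, pk ρ (x - θ₁))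
      (nhdsWithin 1 (Set.Iio 1)) (nhds 0) := by
  apply squeeze_zero_norm' (a := fun ρ : ℝ => (1 - ρ ^ 2) / (2 * Real.pi * (1 - m)) * |d - c|)
  · have hmem : Set.Ioo (1/2 : ℝ) 1 ∈ nhdsWithin 1 (Set.Iio 1) :=
      Ioo_mem_nhdsLT_of_mem (by norm_num)
    filter_upwards [hmem] with ρ hρ
    have h0 : (0:ℝ) < ρ := by linarith [hρ.1]
    apply intervalIntegral.norm_integral_le_of_norm_le_const
    intro x hx
    have hx' : x ∈ Set.uIcc c d := Set.uIoc_subset_uIcc hx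
    rw [Real.norm_eq_abs, abs_of_nonneg (pk_nonneg h0 hρ.2 _)]
    exact pk_le hρ.1.le hρ.2 hm (h x hx')
  · have := (bound_tendsto m hm).mul_const |d - c|
    simpa using this


/-- the fundamental (sifting) property of the Dirac delta
"function": for a continuous `2π`-periodic test function `g` and any open
interval `(a, b) ⊆ [−π, π]` containing `θ₁`,
`∫_a^b g(θ)·u_δ(ρ, θ, θ₁) dθ → g(θ₁)` as `ρ → 1⁻`. -/
theorem stmt_7 (θ₁ : ℝ) (hθ₁ : θ₁ ∈ Set.Ioo (-Real.pi) Real.pi)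
    (g : ℝ → ℝ) (hg : Continuous g) (hper : Function.Periodic g (2 * Real.pi))
    (a b : ℝ) (ha : -Real.pi ≤ a) (hab : a < θ₁) (hb : θ₁ < b) (hbπ : b ≤ Real.pi) :
    Filter.Tendsto (fun ρ : ℝ =>
        ∫ θ in a..b,
          g θ *
            (1 / (2 * Real.pi) -
              (1 / Real.pi) * (ρ * (ρ - Real.cos (θ - θ₁))) /
                ((ρ ^ 2 + 1) - 2 * ρ * Real.cos (θ - θ₁))))
      (nhdsWithin 1 (Set.Iio 1)) (nhds (g θ₁)) := by
  obtain ⟨hθa, hθb⟩ := hθ₁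
  have hab' : a < b := hab.trans hb
  have hmem : Set.Ioo (0:ℝ) 1 ∈ nhdsWithin (1:ℝ) (Set.Iio 1) :=
    Ioo_mem_nhdsLT_of_mem (by norm_num)
  -- nonnegativity
  have hnφ : ∀ᶠ ρ : ℝ in nhdsWithin 1 (Set.Iio 1),
      ∀ x ∈ Set.Icc a b, 0 ≤ pk ρ (x - θ₁) := by
    filter_upwards [hmem] with ρ hρ
    exact fun x _ => pk_nonneg hρ.1 hρ.2 _
  -- uniform convergence away from θ₁
  have hlφ : ∀ u : Set ℝ, IsOpen u → θ₁ ∈ u →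
      TendstoUniformlyOn (fun ρ x => pk ρ (x - θ₁)) 0
        (nhdsWithin 1 (Set.Iio 1)) (Set.Icc a b \ u) := by
    intro u hu hθu
    have hcomp : IsCompact (Set.Icc a b \ u) := isCompact_Icc.diff hu
    have hlt : ∀ x ∈ Set.Icc a b \ u, Real.cos (x - θ₁) < 1 := by
      rintro x ⟨hx, hxu⟩
      apply cos_lt_one_of
      · linarith [hx.1]
      · linarith [hx.2]
      · exact sub_ne_zero.mpr (fun h => hxu (h ▸ hθu))
    rcases (Set.Icc a b \ u).eq_empty_or_nonempty with he | hne
    · rw [he]; exact tendstoUniformlyOn_empty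
    · obtain ⟨m, hm, hbound⟩ := exists_cos_bound θ₁ hcomp hne hlt
      exact pk_unif θ₁ m hm hbound
  -- mass tends to 1
  have hiφ : Filter.Tendsto (fun ρ : ℝ => ∫ x in Set.Icc a b, pk ρ (x - θ₁))
      (nhdsWithin 1 (Set.Iio 1)) (nhds 1) := by
    have hlt1 : ∀ x ∈ Set.uIcc a (θ₁ - Real.pi), Real.cos (x - θ₁) < 1 := by
      intro x hx
      rcases Set.mem_uIcc.1 hx with ⟨h1, h2⟩ | ⟨h1, h2⟩ <;>
        (apply cos_lt_one_of <;> [linarith; linarith; (intro h; rw [sub_eq_zero] at h; subst h; linarith [Real.pi_pos])])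
    have hlt2 : ∀ x ∈ Set.uIcc (θ₁ + Real.pi) b, Real.cos (x - θ₁) < 1 := by
      intro x hx
      rcases Set.mem_uIcc.1 hx with ⟨h1, h2⟩ | ⟨h1, h2⟩ <;>
        (apply cos_lt_one_of <;> [linarith; linarith; (intro h; rw [sub_eq_zero] at h; subst h; linarith [Real.pi_pos])])
    obtain ⟨m₁, hm₁, hb₁⟩ := exists_cos_bound θ₁ isCompact_uIcc
      ⟨a, Set.left_mem_uIcc⟩ hlt1
    obtain ⟨m₂, hm₂, hb₂⟩ := exists_cos_bound θ₁ isCompact_uIcc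
      ⟨b, Set.right_mem_uIcc⟩ hlt2
    have t1 := tail_tendsto θ₁ a (θ₁ - Real.pi) m₁ hm₁ hb₁
    have t2 := tail_tendsto θ₁ (θ₁ + Real.pi) b m₂ hm₂ hb₂
    have hsum : Filter.Tendsto (fun ρ : ℝ =>
        (∫ x in a..(θ₁ - Real.pi), pk ρ (x - θ₁)) + (1 : ℝ) +
          (∫ x in (θ₁ + Real.pi)..b, pk ρ (x - θ₁)))
        (nhdsWithin 1 (Set.Iio 1)) (nhds ((0 + 1) + 0)) :=
      (t1.add tendsto_const_nhds).add t2
    rw [show ((0:ℝ) + 1) + 0 = 1 by norm_num] at hsum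
    apply hsum.congr'
    filter_upwards [hmem] with ρ hρ
    have hcont : Continuous (fun x : ℝ => pk ρ (x - θ₁)) :=
      (pk_continuous hρ.1 hρ.2).comp (continuous_id.sub continuous_const)
    have ii : ∀ u v : ℝ, IntervalIntegrable (fun x => pk ρ (x - θ₁)) volume u v :=
      fun u v => hcont.intervalIntegrable u v
    have hmid : ∫ x in (θ₁ - Real.pi)..(θ₁ + Real.pi), pk ρ (x - θ₁) = 1 := by
      rw [intervalIntegral.integral_comp_sub_right (fun x => pk ρ x) θ₁,
        show θ₁ - Real.pi - θ₁ = -Real.pi by ring, show θ₁ + Real.pi - θ₁ = Real.pi by ring]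
      exact pk_integral hρ.1 hρ.2
    rw [MeasureTheory.integral_Icc_eq_integral_Ioc, ← intervalIntegral.integral_of_le hab'.le,
      ← intervalIntegral.integral_add_adjacent_intervals (ii a (θ₁ - Real.pi))
        (ii (θ₁ - Real.pi) b),
      ← intervalIntegral.integral_add_adjacent_intervals (ii (θ₁ - Real.pi) (θ₁ + Real.pi))
        (ii (θ₁ + Real.pi) b), hmid]
    ring
  -- measurability
  have h'iφ : ∀ᶠ ρ : ℝ in nhdsWithin 1 (Set.Iio 1),
      AEStronglyMeasurable (fun x : ℝ => pk ρ (x - θ₁)) (volume.restrict (Set.Icc a b)) := by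
    filter_upwards [hmem] with ρ hρ
    exact ((pk_continuous hρ.1 hρ.2).comp
      (continuous_id.sub continuous_const)).aestronglyMeasurable
  have hmg : IntegrableOn g (Set.Icc a b) volume := hg.integrableOn_Icc
  have hcg : Filter.Tendsto g (nhdsWithin θ₁ (Set.Icc a b)) (nhds (g θ₁)) :=
    (hg.tendsto θ₁).mono_left nhdsWithin_le_nhds
  have hA := tendsto_setIntegral_peak_smul_of_integrableOn_of_tendsto
    (μ := volume) measurableSet_Icc measurableSet_Icc subset_rfl self_mem_nhdsWithin
    measure_Icc_lt_top.ne hnφ hlφ hiφ h'iφ hmg hcg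
  apply hA.congr'
  filter_upwards [hmem] with ρ hρ
  rw [intervalIntegral.integral_of_le hab'.le, ← MeasureTheory.integral_Icc_eq_integral_Ioc]
  apply MeasureTheory.setIntegral_congr_fun measurableSet_Icc
  intro x hx
  simp only [smul_eq_mul]
  rw [mul_comm, pk_eq hρ.1 hρ.2]
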